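/- The Mori–Zwanzig identity: for every vector x, (d/dt) e^{tL} x = e^{tL} P L x + e^{tQL} Q L x + ∫₀ᵗ e^{(t−s)L} P L e^{sQL} Q L x ds, where P + Q = I. -/

import Mathlib

open NormedSpace

/-- The Mori–Zwanzig identity: for every vector `x`,
`(d/dt) e^{tL} x = e^{tL} P L x + e^{tQL} Q L x + ∫₀ᵗ e^{(t−s)L} P L e^{sQL} Q L x ds`,
where `Q = I − P`. -/
theorem mori_zwanzig_identity
    (X : Type*) [NormedAddCommGroup X] [NormedSpace ℝ X] [CompleteSpace X]
    (L P : X →L[ℝ] X) (hP : P ∘L P = P) (x : X) (t : ℝ) :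
    HasDerivAt (fun τ : ℝ => exp (τ • L) x)
      (exp (t • L) (P (L x)) + exp (t • ((1 - P) * L)) ((1 - P) (L x)) +
        ∫ s in (0 : ℝ)..t,
          exp ((t - s) • L) (P (L (exp (s • ((1 - P) * L)) ((1 - P) (L x)))))) t := by
  set Q : X →L[ℝ] X := 1 - P with hQdef
  set y : X := Q (L x) with hy
  set g : ℝ → X := fun s => exp ((t - s) • L) (P (L (exp (s • (Q * L)) y))) with hg
  have hcont1 : Continuous fun s : ℝ => exp ((t - s) • L) :=
    (continuous_iff_continuousAt.2 fun _ => (exp_analytic (𝕂 := ℝ) _).continuousAt).comp ((continuous_const.sub continuous_id).smul continuous_const)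
  have hcont2 : Continuous fun s : ℝ => exp (s • (Q * L)) :=
    (continuous_iff_continuousAt.2 fun _ => (exp_analytic (𝕂 := ℝ) _).continuousAt).comp (continuous_id.smul continuous_const)
  have hgcont : Continuous g := by
    apply hcont1.clm_apply
    exact (P.comp L).continuous.comp (hcont2.clm_apply continuous_const)
  -- Duhamel's formula
  have key : exp (t • L) y = exp (t • (Q * L)) y + ∫ s in (0:ℝ)..t, g s := by
    have hderiv : ∀ s : ℝ,
        HasDerivAt (fun s : ℝ => (exp ((t - s) • L) * exp (s • (Q * L))) y) (-(g s)) s := by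
      intro s
      have hinner : HasDerivAt (fun u : ℝ => t - u) (-1 : ℝ) s := by
        simpa using (hasDerivAt_id s).const_sub t
      have h1 : HasDerivAt (fun s : ℝ => exp ((t - s) • L))
          (-(exp ((t - s) • L) * L)) s := by
        have houter : HasDerivAt (fun u : ℝ => exp (u • L))
            (exp ((t - s) • L) * L) (t - s) := hasDerivAt_exp_smul_const L (t - s)
        have := HasDerivAt.scomp s houter hinner
        simpa [Function.comp_def] using this
      have h2 : HasDerivAt (fun s : ℝ => exp (s • (Q * L)))
          ((Q * L) * exp (s • (Q * L))) s := hasDerivAt_exp_smul_const' (Q * L) s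
      have hap := (h1.mul h2).clm_apply (hasDerivAt_const s y)
      convert hap using 1
      · rfl
      have hPL : -(exp ((t - s) • L) * L) * exp (s • (Q * L)) +
          exp ((t - s) • L) * ((Q * L) * exp (s • (Q * L))) =
          -(exp ((t - s) • L) * ((P * L) * exp (s • (Q * L)))) := by
        have hPQ : (P : X →L[ℝ] X) * L = L - Q * L := by
          rw [hQdef]; noncomm_ring
        rw [hPQ]; noncomm_ring
      simp only [map_zero, add_zero]
      rw [hPL]
      simp [hg, ContinuousLinearMap.mul_apply]
    have hFTC := intervalIntegral.integral_eq_sub_of_hasDerivAt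
      (f := fun s : ℝ => (exp ((t - s) • L) * exp (s • (Q * L))) y)
      (fun s _ => hderiv s)
      (hgcont.neg.intervalIntegrable 0 t)
    rw [intervalIntegral.integral_neg] at hFTC
    simp only [sub_self, sub_zero, zero_smul, exp_zero, mul_one, one_mul] at hFTC
    have hI : (∫ s in (0:ℝ)..t, g s) = exp (t • L) y - exp (t • (Q * L)) y := by
      rw [← neg_neg (∫ s in (0:ℝ)..t, g s), hFTC]; abel
    rw [hI]; abel
  -- the main derivative
  have hmain : HasDerivAt (fun τ : ℝ => exp (τ • L) x) (exp (t • L) (L x)) t := by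
    have := (hasDerivAt_exp_smul_const L t).clm_apply (hasDerivAt_const t x)
    simpa using this
  convert hmain using 1
  have hsplit : exp (t • L) (L x) = exp (t • L) (P (L x)) + exp (t • L) y := by
    rw [← map_add]
    congr 1
    simp [hy, hQdef]
  rw [hsplit, key]
  abel
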